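/- Let (X,d) be a metric space, r ≥ 0, and let η₁ : [0,T₁] → X and η₂ : [0,T₂] → X be unit-speed geodesics such that the Hausdorff distance between their images is at most r, d(η₁(0), η₂(0)) ≤ 5r, and |T₁ − T₂| ≤ 2r. Then for every l ∈ [0, min(T₁,T₂)] one has d(η₁(l), η₂(l)) ≤ 9r. -/
import Mathlib


open Set Metric

/-- If two unit-speed geodesics have images within Hausdorff distance `r`, starting points
within `5r`, and lengths within `2r`, then they are pointwise within `9r` of each other
on the common part of their time intervals. -/
theorem geodesics_pointwise_close {X : Type*} [MetricSpace X]
    (r T₁ T₂ : ℝ) (hr : 0 ≤ r) (hT₁ : 0 ≤ T₁) (hT₂ : 0 ≤ T₂) (η₁ η₂ : ℝ → X)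
    (h₁ : ∀ s ∈ Icc (0:ℝ) T₁, ∀ t ∈ Icc (0:ℝ) T₁, dist (η₁ s) (η₁ t) = |s - t|)
    (h₂ : ∀ s ∈ Icc (0:ℝ) T₂, ∀ t ∈ Icc (0:ℝ) T₂, dist (η₂ s) (η₂ t) = |s - t|)
    (hH : hausdorffDist (η₁ '' Icc 0 T₁) (η₂ '' Icc 0 T₂) ≤ r)
    (h0 : dist (η₁ 0) (η₂ 0) ≤ 5 * r)
    (hT : |T₁ - T₂| ≤ 2 * r) :
    ∀ l ∈ Icc (0:ℝ) (min T₁ T₂), dist (η₁ l) (η₂ l) ≤ 9 * r := by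
  intro l hl
  obtain ⟨hl0, hlm⟩ := hl
  have hl1 : l ∈ Icc (0:ℝ) T₁ := ⟨hl0, hlm.trans (min_le_left _ _)⟩
  have hl2 : l ∈ Icc (0:ℝ) T₂ := ⟨hl0, hlm.trans (min_le_right _ _)⟩
  have h0m1 : (0:ℝ) ∈ Icc (0:ℝ) T₁ := ⟨le_refl _, hT₁⟩
  have h0m2 : (0:ℝ) ∈ Icc (0:ℝ) T₂ := ⟨le_refl _, hT₂⟩
  have hb1 : (η₁ '' Icc 0 T₁) ⊆ closedBall (η₁ 0) T₁ := by
    rintro _ ⟨t, ht, rfl⟩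
    simp only [mem_closedBall]
    rw [h₁ t ht 0 h0m1, sub_zero, abs_of_nonneg ht.1]
    exact ht.2
  have hb2 : (η₂ '' Icc 0 T₂) ⊆ closedBall (η₂ 0) T₂ := by
    rintro _ ⟨t, ht, rfl⟩
    simp only [mem_closedBall]
    rw [h₂ t ht 0 h0m2, sub_zero, abs_of_nonneg ht.1]
    exact ht.2
  have hne1 : (η₁ '' Icc 0 T₁).Nonempty := ⟨η₁ 0, 0, h0m1, rfl⟩
  have hne2 : (η₂ '' Icc 0 T₂).Nonempty := ⟨η₂ 0, 0, h0m2, rfl⟩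
  have hedist : EMetric.hausdorffEdist (η₁ '' Icc 0 T₁) (η₂ '' Icc 0 T₂) ≠ ⊤ :=
    Metric.hausdorffEdist_ne_top_of_nonempty_of_bounded hne1 hne2
      ((isBounded_closedBall).subset hb1) ((isBounded_closedBall).subset hb2)
  have hinf : infDist (η₁ l) (η₂ '' Icc 0 T₂) ≤ r :=
    (infDist_le_hausdorffDist_of_mem (mem_image_of_mem η₁ hl1) hedist).trans hH
  have key : dist (η₁ l) (η₂ l) ≤ 7 * r := by
    apply le_of_forall_pos_le_add
    intro ε hε
    obtain ⟨_, ⟨s, hs, rfl⟩, hy⟩ := (infDist_lt_iff hne2).1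
      (lt_of_le_of_lt hinf (by linarith : r < r + ε / 2))
    have hds0 : dist (η₂ s) (η₂ 0) = s := by
      rw [h₂ s hs 0 h0m2, sub_zero, abs_of_nonneg hs.1]
    have hdl0 : dist (η₁ l) (η₁ 0) = l := by
      rw [h₁ l hl1 0 h0m1, sub_zero, abs_of_nonneg hl0]
    have hdls : dist (η₂ l) (η₂ s) = |l - s| := h₂ l hl2 s hs
    have tri1 : dist (η₂ s) (η₂ 0) ≤ dist (η₂ s) (η₁ l) + dist (η₁ l) (η₁ 0)
        + dist (η₁ 0) (η₂ 0) := by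
      calc dist (η₂ s) (η₂ 0) ≤ dist (η₂ s) (η₁ 0) + dist (η₁ 0) (η₂ 0) := dist_triangle _ _ _
        _ ≤ (dist (η₂ s) (η₁ l) + dist (η₁ l) (η₁ 0)) + dist (η₁ 0) (η₂ 0) := by
            have := dist_triangle (η₂ s) (η₁ l) (η₁ 0); linarith
    have tri2 : dist (η₁ l) (η₁ 0) ≤ dist (η₁ l) (η₂ s) + dist (η₂ s) (η₂ 0)
        + dist (η₂ 0) (η₁ 0) := by
      calc dist (η₁ l) (η₁ 0) ≤ dist (η₁ l) (η₂ 0) + dist (η₂ 0) (η₁ 0) := dist_triangle _ _ _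
        _ ≤ (dist (η₁ l) (η₂ s) + dist (η₂ s) (η₂ 0)) + dist (η₂ 0) (η₁ 0) := by
            have := dist_triangle (η₁ l) (η₂ s) (η₂ 0); linarith
    have habs : |l - s| ≤ dist (η₁ l) (η₂ s) + 5 * r := by
      rw [abs_le]
      rw [dist_comm (η₂ s) (η₁ l)] at tri1
      rw [dist_comm (η₂ 0) (η₁ 0)] at tri2
      constructor <;> [skip; skip] <;>
        · rw [hds0] at tri1; rw [hdl0] at tri1 tri2; rw [hds0] at tri2; linarith
    have trifin : dist (η₁ l) (η₂ l) ≤ dist (η₁ l) (η₂ s) + dist (η₂ s) (η₂ l) :=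
      dist_triangle _ _ _
    rw [dist_comm (η₂ s) (η₂ l), hdls] at trifin
    linarith
  linarith
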